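/- arXiv:2306.07718 — 3 statements merged into one kernel-verified Lean document; each statement's English description precedes it below -/
import Mathlib

section
/- Let p be prime, q = p^m, and let h < m. Fix a j-dimensional F_p-subspace U of F_q with 0 <= j <= h. Define G(U) to be the set of vectors a = (a_0,...,a_h) in F_q^{h+1} such that every element of U is a root of the linearized polynomial f_a(x) = sum_{i=0}^h a_i x^{p^i}. Then |G(U)| = q^{h+1-j}. -/
/-- Gaussian binomial coefficient (defined via the `q`-Pascal recurrence). -/
def gaussBinom (p : ℕ) : ℕ → ℕ → ℕ
  | _, 0 => 1
  | 0, _+1 => 0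
  | n+1, k+1 => gaussBinom p n k + p^(k+1) * gaussBinom p n (k+1)

/-- Gaussian binomial coefficient with integer lower index (`0` for negative index). -/
def gaussBinomI (p n : ℕ) (k : ℤ) : ℕ := if 0 ≤ k then gaussBinom p n k.toNat else 0

open Finset Polynomial


lemma prod_sub_algebraMap (p : ℕ) [Fact p.Prime] (F : Type) [Field F] [Algebra (ZMod p) F]
    (z : F) : ∏ c : ZMod p, (z - algebraMap (ZMod p) F c) = z ^ p - z := by
  have hp1 : 1 < p := (Fact.out : p.Prime).one_lt
  have hq : Fintype.card (ZMod p) = p := ZMod.card p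
  have hroots : (X ^ p - X : (ZMod p)[X]).roots = Finset.univ.val := by
    have := FiniteField.roots_X_pow_card_sub_X (ZMod p)
    rwa [hq] at this
  have hmonic : (X ^ p - X : (ZMod p)[X]).Monic := by
    apply monic_X_pow_sub
    rw [degree_X]
    exact_mod_cast hp1
  have hdeg : (X ^ p - X : (ZMod p)[X]).natDegree = p :=
    FiniteField.X_pow_card_sub_X_natDegree_eq (ZMod p) hp1
  have hfac := prod_multiset_X_sub_C_of_monic_of_roots_card_eq hmonic
    (by rw [hroots, hdeg]; simpa using hq)
  rw [hroots] at hfac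
  have hfac2 : ∏ c : ZMod p, (X - C c) = (X ^ p - X : (ZMod p)[X]) := by
    rw [Finset.prod_eq_multiset_prod]; exact hfac
  have := congrArg (aeval z) hfac2
  simpa using this

lemma prod_sub_smul (p : ℕ) [Fact p.Prime] (F : Type) [Field F] [Algebra (ZMod p) F]
    (z t : F) : ∏ c : ZMod p, (z - c • t) = z ^ p - t ^ (p - 1) * z := by
  have hp1 : 1 < p := (Fact.out : p.Prime).one_lt
  rcases eq_or_ne t 0 with rfl | ht
  · simp only [smul_zero, sub_zero, Finset.prod_const, Finset.card_univ, ZMod.card]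
    rw [zero_pow (by omega), zero_mul, sub_zero]
  · calc ∏ c : ZMod p, (z - c • t)
        = ∏ c : ZMod p, (t * (z / t - algebraMap (ZMod p) F c)) := by
          refine Finset.prod_congr rfl fun c _ => ?_
          rw [Algebra.smul_def]; field_simp
      _ = t ^ p * ((z / t) ^ p - z / t) := by
          rw [Finset.prod_mul_distrib, Finset.prod_const, Finset.card_univ, ZMod.card,
            prod_sub_algebraMap]
      _ = z ^ p - t ^ (p - 1) * z := by
          have : t ^ p = t ^ (p - 1) * t := by
            rw [← pow_succ]; congr 1; omega
          rw [mul_sub, div_pow, this]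
          field_simp

lemma exists_coeffs (p : ℕ) [Fact p.Prime] (F : Type) [Field F] [Algebra (ZMod p) F]
    [CharP F p] :
    ∀ (k : ℕ) (v : Fin k → F), ∃ c : ℕ → F, (∀ i, k + 1 ≤ i → c i = 0) ∧
      ∀ x : F, ∑ i ∈ Finset.range (k + 1), c i * x ^ p ^ i
        = ∏ t : Fin k → ZMod p, (x - ∑ i, t i • v i) := by
  have hp : p.Prime := Fact.out
  intro k
  induction k with
  | zero =>
    intro v
    refine ⟨fun i => if i = 0 then 1 else 0, ?_, ?_⟩
    · intro i hi
      have h1 : ¬ i = 0 := by omega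
      simp [h1]
    · intro x
      rw [Finset.sum_range_one]
      simp [Finset.univ_unique]
  | succ k ih =>
    intro v
    obtain ⟨c, hc0, hc⟩ := ih (fun i => v i.succ)
    set L : F → F := fun x => ∑ i ∈ Finset.range (k + 1), c i * x ^ p ^ i with hLdef
    set t0 : F := L (v 0) with ht0
    refine ⟨fun i => (if i = 0 then 0 else (c (i - 1)) ^ p) - t0 ^ (p - 1) * c i, ?_, ?_⟩
    · intro i hi
      have h1 : ¬ i = 0 := by omega
      simp only [h1, if_false, hc0 i (by omega), hc0 (i - 1) (by omega),
        zero_pow hp.ne_zero, mul_zero, sub_zero]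
    · intro x
      have hLsub : ∀ (a : ZMod p) (y z : F), L (z - a • y) = L z - a • L y := by
        intro a y z
        simp only [hLdef, Finset.smul_sum, ← Finset.sum_sub_distrib]
        refine Finset.sum_congr rfl fun i _ => ?_
        rw [sub_pow_char_pow, _root_.smul_pow, ZMod.pow_card_pow, mul_sub, mul_smul_comm]
      -- RHS: reindex over cons
      have hre : ∏ t : Fin (k + 1) → ZMod p, (x - ∑ i, t i • v i)
          = ∏ y : ZMod p × (Fin k → ZMod p),
              (x - ∑ i : Fin (k + 1), (Fin.cons y.1 y.2 : Fin (k+1) → ZMod p) i • v i) :=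
        (Equiv.prod_comp (Fin.consEquiv fun _ => ZMod p)
          (fun t => x - ∑ i, t i • v i)).symm
      have hsum : ∀ (a : ZMod p) (s : Fin k → ZMod p),
          ∑ i : Fin (k + 1), (Fin.cons a s : Fin (k+1) → ZMod p) i • v i
            = a • v 0 + ∑ i : Fin k, s i • v i.succ := by
        intro a s
        rw [Fin.sum_univ_succ]
        simp
      have hrhs : ∏ t : Fin (k + 1) → ZMod p, (x - ∑ i, t i • v i)
          = (L x) ^ p - t0 ^ (p - 1) * L x := by
        rw [hre, Fintype.prod_prod_type]
        have : ∀ a : ZMod p, (∏ s : Fin k → ZMod p,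
            (x - ∑ i : Fin (k + 1), (Fin.cons a s : Fin (k+1) → ZMod p) i • v i))
              = L x - a • t0 := by
          intro a
          have : ∀ s : Fin k → ZMod p,
              x - ∑ i : Fin (k + 1), (Fin.cons a s : Fin (k+1) → ZMod p) i • v i
                = (x - a • v 0) - ∑ i : Fin k, s i • v i.succ := by
            intro s; rw [hsum]; ring
          rw [Finset.prod_congr rfl fun s _ => this s, ← hc (x - a • v 0)]
          show L (x - a • v 0) = L x - a • t0
          rw [hLsub a (v 0) x, ht0]
        rw [Finset.prod_congr rfl fun a _ => this a]
        exact prod_sub_smul p F (L x) t0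
      rw [hrhs]
      -- LHS
      have hLpow : (L x) ^ p = ∑ i ∈ Finset.range (k + 1), (c i) ^ p * x ^ p ^ (i + 1) := by
        rw [hLdef]
        rw [sum_pow_char]
        refine Finset.sum_congr rfl fun i _ => ?_
        rw [mul_pow, ← pow_mul, ← pow_succ]
      have hsplit : ∑ i ∈ Finset.range (k + 1 + 1),
          ((if i = 0 then 0 else (c (i - 1)) ^ p) - t0 ^ (p - 1) * c i) * x ^ p ^ i
          = (∑ i ∈ Finset.range (k + 2), (if i = 0 then 0 else (c (i - 1)) ^ p) * x ^ p ^ i)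
            - t0 ^ (p - 1) * ∑ i ∈ Finset.range (k + 2), c i * x ^ p ^ i := by
        rw [Finset.mul_sum, ← Finset.sum_sub_distrib]
        refine Finset.sum_congr rfl fun i _ => ?_
        ring
      rw [hsplit]
      have h1 : ∑ i ∈ Finset.range (k + 2), (if i = 0 then 0 else (c (i - 1)) ^ p) * x ^ p ^ i
          = ∑ i ∈ Finset.range (k + 1), (c i) ^ p * x ^ p ^ (i + 1) := by
        rw [Finset.sum_range_succ' _ (k + 1)]
        simp
      have h2 : ∑ i ∈ Finset.range (k + 2), c i * x ^ p ^ i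
          = ∑ i ∈ Finset.range (k + 1), c i * x ^ p ^ i := by
        rw [Finset.sum_range_succ, hc0 (k + 1) le_rfl, zero_mul, add_zero]
      rw [h1, h2, ← hLpow]

lemma exists_annihilator (p : ℕ) [Fact p.Prime] (F : Type) [Field F] [Fintype F]
    [Algebra (ZMod p) F] [CharP F p] (h j : ℕ) (hj : j ≤ h) (U : Submodule (ZMod p) F)
    (hU : Module.finrank (ZMod p) U = j) (w : F) (hw : w ∉ U) :
    ∃ a : Fin (h + 1) → F, (∀ u ∈ U, ∑ i : Fin (h + 1), a i * u ^ p ^ (i : ℕ) = 0) ∧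
      ∑ i : Fin (h + 1), a i * w ^ p ^ (i : ℕ) ≠ 0 := by
  have b : Module.Basis (Fin j) (ZMod p) U := Module.finBasisOfFinrankEq (ZMod p) U hU
  set v : Fin j → F := fun i => (b i : F) with hv
  obtain ⟨c, hc0, hc⟩ := exists_coeffs p F j v
  have hsum : ∀ x : F, ∑ i : Fin (h + 1), c i * x ^ p ^ (i : ℕ)
      = ∏ t : Fin j → ZMod p, (x - ∑ i, t i • v i) := by
    intro x
    rw [Fin.sum_univ_eq_sum_range (fun i => c i * x ^ p ^ i) (h + 1), ← hc x]
    exact (Finset.sum_subset (Finset.range_subset_range.mpr (by omega)) (fun i _ hi => by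
      rw [hc0 i (by simpa using hi), zero_mul])).symm
  refine ⟨fun i => c i, ?_, ?_⟩
  · intro u hu
    rw [hsum]
    set t : Fin j → ZMod p := fun i => b.repr ⟨u, hu⟩ i with htdef
    apply Finset.prod_eq_zero (Finset.mem_univ t)
    have h1 : (⟨u, hu⟩ : U) = ∑ i, t i • b i := (b.sum_repr ⟨u, hu⟩).symm
    have h2 : u = ∑ i, t i • v i := by
      have := congrArg (Subtype.val : U → F) h1
      simpa [hv] using this
    rw [← h2, sub_self]
  · rw [hsum]
    intro h0
    obtain ⟨t, _, ht⟩ := Finset.prod_eq_zero_iff.mp h0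
    apply hw
    rw [sub_eq_zero.mp ht]
    exact Submodule.sum_mem _ fun i _ => Submodule.smul_mem _ _ (b i).2

lemma main_aux (p m h : ℕ) [Fact p.Prime] (F : Type) [Field F] [Fintype F]
    [Algebra (ZMod p) F] [CharP F p] (hcard : Fintype.card F = p ^ m) (j : ℕ) :
    ∀ U : Submodule (ZMod p) F, j ≤ h → Module.finrank (ZMod p) U = j →
    Nat.card {a : Fin (h+1) → F // ∀ u ∈ U, ∑ i : Fin (h+1), a i * u ^ p ^ (i : ℕ) = 0} =
      (p ^ m) ^ (h + 1 - j) := by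
  have hp : p.Prime := Fact.out
  have hcardF : Nat.card F = p ^ m := by rw [Nat.card_eq_fintype_card, hcard]
  induction j with
  | zero =>
    intro U _ hU
    have hbot : U = ⊥ := Submodule.finrank_eq_zero.mp hU
    subst hbot
    have he : ∀ a : Fin (h+1) → F, ∀ u ∈ (⊥ : Submodule (ZMod p) F),
        ∑ i : Fin (h+1), a i * u ^ p ^ (i : ℕ) = 0 := by
      intro a u hu
      rw [Submodule.mem_bot] at hu
      subst hu
      simp [zero_pow (pow_ne_zero _ hp.ne_zero)]
    rw [Nat.card_congr (Equiv.subtypeUnivEquiv he)]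
    rw [Nat.card_eq_fintype_card, Fintype.card_fun, hcard, Fintype.card_fin]
    simp
  | succ j ih =>
    intro U hj1 hU
    have hjh : j ≤ h := by omega
    have b : Module.Basis (Fin (j+1)) (ZMod p) U := Module.finBasisOfFinrankEq (ZMod p) U hU
    set v : Fin (j+1) → F := fun i => (b i : F) with hv
    have hv_li : LinearIndependent (ZMod p) v := by
      have := b.linearIndependent.map' U.subtype (Submodule.ker_subtype U)
      exact this
    set w : F := v (Fin.last j) with hwdef
    set U' : Submodule (ZMod p) F :=
      Submodule.span (ZMod p) (Set.range (v ∘ Fin.castSucc : Fin j → F)) with hU'def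
    have hU'rank : Module.finrank (ZMod p) U' = j := by
      rw [finrank_span_eq_card (hv_li.comp Fin.castSucc (Fin.castSucc_injective j))]
      · simp
    have hw_notin : w ∉ U' := by
      have hnot : Fin.last j ∉ Set.range (Fin.castSucc : Fin j → Fin (j+1)) := by
        rintro ⟨i, hi⟩
        exact absurd hi (Fin.castSucc_lt_last i).ne
      have := hv_li.notMem_span_image (s := Set.range (Fin.castSucc : Fin j → Fin (j+1))) hnot
      intro hmem
      apply this
      rwa [hU'def, Set.range_comp] at hmem
    have hU'le : U' ≤ U := by
      rw [hU'def, Submodule.span_le]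
      rintro _ ⟨i, rfl⟩
      exact (b i.castSucc).2
    have hwU : w ∈ U := (b (Fin.last j)).2
    -- U = span of range v
    have hUspan : U = Submodule.span (ZMod p) (Set.range v) := by
      have h1 := b.span_eq
      have h2 := congrArg (Submodule.map U.subtype) h1
      rw [Submodule.map_span, Submodule.map_subtype_top, ← Set.range_comp] at h2
      exact h2.symm
    -- kernel submodule of f_a
    have hker : ∀ a : Fin (h+1) → F, ∃ K : Submodule (ZMod p) F,
        ∀ x : F, x ∈ K ↔ ∑ i : Fin (h+1), a i * x ^ p ^ (i : ℕ) = 0 := by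
      intro a
      refine ⟨{ carrier := {x | ∑ i : Fin (h+1), a i * x ^ p ^ (i : ℕ) = 0}
                add_mem' := ?_, zero_mem' := ?_, smul_mem' := ?_ }, fun x => Iff.rfl⟩
      · intro x y hx hy
        simp only [Set.mem_setOf_eq] at hx hy
        show ∑ i : Fin (h+1), a i * (x + y) ^ p ^ (i : ℕ) = 0
        have hxy : ∑ i : Fin (h+1), a i * (x + y) ^ p ^ (i : ℕ)
            = (∑ i : Fin (h+1), a i * x ^ p ^ (i : ℕ))
              + ∑ i : Fin (h+1), a i * y ^ p ^ (i : ℕ) := by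
          rw [← Finset.sum_add_distrib]
          exact Finset.sum_congr rfl fun i _ => by rw [add_pow_char_pow, mul_add]
        rw [hxy, hx, hy, add_zero]
      · simp [zero_pow (pow_ne_zero _ hp.ne_zero)]
      · intro t x hx
        simp only [Set.mem_setOf_eq] at hx
        show ∑ i : Fin (h+1), a i * (t • x) ^ p ^ (i : ℕ) = 0
        have hs : ∑ i : Fin (h+1), a i * (t • x) ^ p ^ (i : ℕ)
            = t • ∑ i : Fin (h+1), a i * x ^ p ^ (i : ℕ) := by
          rw [Finset.smul_sum]
          exact Finset.sum_congr rfl fun i _ => by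
            rw [_root_.smul_pow, ZMod.pow_card_pow, mul_smul_comm]
        rw [hs, hx, smul_zero]
    -- membership characterization
    have hchar : ∀ a : Fin (h+1) → F,
        (∀ u ∈ U, ∑ i : Fin (h+1), a i * u ^ p ^ (i : ℕ) = 0) ↔
        ((∀ u ∈ U', ∑ i : Fin (h+1), a i * u ^ p ^ (i : ℕ) = 0) ∧
          ∑ i : Fin (h+1), a i * w ^ p ^ (i : ℕ) = 0) := by
      intro a
      constructor
      · exact fun H => ⟨fun u hu => H u (hU'le hu), H w hwU⟩
      · rintro ⟨H1, H2⟩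
        obtain ⟨K, hK⟩ := hker a
        have hle : U ≤ K := by
          rw [hUspan, Submodule.span_le]
          rintro _ ⟨i, rfl⟩
          rw [SetLike.mem_coe, hK]
          refine Fin.lastCases ?_ ?_ i
          · exact H2
          · intro i
            exact H1 _ (Submodule.subset_span ⟨i, rfl⟩)
        exact fun u hu => (hK u).mp (hle hu)
    -- the F-submodule G' of coefficient vectors vanishing on U'
    set G' : Submodule F (Fin (h+1) → F) :=
      { carrier := {a | ∀ u ∈ U', ∑ i : Fin (h+1), a i * u ^ p ^ (i : ℕ) = 0}
        add_mem' := by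
          intro a b ha hb u hu
          simp only [Set.mem_setOf_eq] at ha hb
          simp only [Pi.add_apply, add_mul, Finset.sum_add_distrib, ha u hu, hb u hu, add_zero]
        zero_mem' := by simp
        smul_mem' := by
          intro t a ha u hu
          simp only [Set.mem_setOf_eq] at ha
          simp only [Pi.smul_apply, smul_eq_mul, mul_assoc, ← Finset.mul_sum, ha u hu,
            mul_zero] } with hG'def
    have hmemG' : ∀ a : Fin (h+1) → F,
        a ∈ G' ↔ ∀ u ∈ U', ∑ i : Fin (h+1), a i * u ^ p ^ (i : ℕ) = 0 := fun _ => Iff.rfl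
    -- the evaluation map at w
    set φ : G' →ₗ[F] F :=
      { toFun := fun a => ∑ i : Fin (h+1), a.1 i * w ^ p ^ (i : ℕ)
        map_add' := by
          intro a b
          simp [add_mul, Finset.sum_add_distrib]
        map_smul' := by
          intro t a
          simp [mul_assoc, Finset.mul_sum] } with hφdef
    have hφ_surj : Function.Surjective φ := by
      obtain ⟨a, ha1, ha2⟩ := exists_annihilator p F h j hjh U' hU'rank w hw_notin
      intro y
      refine ⟨(y / (∑ i : Fin (h+1), a i * w ^ p ^ (i : ℕ))) • ⟨a, (hmemG' a).mpr ha1⟩, ?_⟩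
      show ∑ i : Fin (h+1),
        ((y / (∑ i : Fin (h+1), a i * w ^ p ^ (i : ℕ))) • a) i * w ^ p ^ (i : ℕ) = y
      simp only [Pi.smul_apply, smul_eq_mul, mul_assoc, ← Finset.mul_sum]
      exact div_mul_cancel₀ y ha2
    -- card of G' from IH
    have hcardG' : Nat.card G' = (p ^ m) ^ (h + 1 - j) := by
      rw [Nat.card_congr (Equiv.subtypeEquivRight hmemG')]
      exact ih U' hjh hU'rank
    -- quotient
    have hquot : Nat.card G' = Nat.card (LinearMap.ker φ) * Nat.card F := by
      have h1 := Submodule.card_eq_card_quotient_mul_card (LinearMap.ker φ)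
      have h2 : Nat.card (G' ⧸ LinearMap.ker φ) = Nat.card F :=
        Nat.card_congr (LinearMap.quotKerEquivOfSurjective φ hφ_surj).toEquiv
      rw [h1, h2]
    -- the goal set is equivalent to ker φ
    have hequiv : {a : Fin (h+1) → F // ∀ u ∈ U, ∑ i : Fin (h+1), a i * u ^ p ^ (i : ℕ) = 0}
        ≃ LinearMap.ker φ := by
      refine ⟨fun a => ⟨⟨a.1, (hmemG' a.1).mpr ((hchar a.1).mp a.2).1⟩, ?_⟩,
        fun x => ⟨x.1.1, (hchar x.1.1).mpr ⟨(hmemG' x.1.1).mp x.1.2, x.2⟩⟩, ?_, ?_⟩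
      · exact ((hchar a.1).mp a.2).2
      · intro a; rfl
      · intro x; rfl
    rw [Nat.card_congr hequiv]
    have harith : (p ^ m) ^ (h + 1 - j) = p ^ m * (p ^ m) ^ (h + 1 - (j + 1)) := by
      rw [← pow_succ']
      congr 1
      omega
    have hfin := hquot.symm.trans hcardG'
    rw [hcardF, harith, mul_comm (Nat.card (LinearMap.ker φ))] at hfin
    exact Nat.eq_of_mul_eq_mul_left (pow_pos hp.pos m) hfin

theorem stmt3 (p m h : ℕ) [Fact p.Prime] (hm : 0 < m) (F : Type) [Field F] [Fintype F]
    [Algebra (ZMod p) F] (hcard : Fintype.card F = p ^ m) (hh : h < m) (j : ℕ) (hj : j ≤ h)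
    (U : Submodule (ZMod p) F) (hU : Module.finrank (ZMod p) ↥U = j) :
    Nat.card {a : Fin (h+1) → F // ∀ u ∈ U, ∑ i : Fin (h+1), a i * u ^ p ^ (i : ℕ) = 0} =
      (p ^ m) ^ (h + 1 - j) := by
  haveI : CharP F p := charP_of_injective_algebraMap (algebraMap (ZMod p) F).injective p
  exact main_aux p m h F hcard j U hj hU
end

section
/- Let p be prime, q = p^m, h < m, and let C be the evaluation code of all polynomials f(x) = c + sum_{i=0}^h a_i x^{p^i} over F_q. Then every nonzero codeword of C has Hamming weight in the set {q - p^h, q - p^{h-1}, ..., q - p, q - 1, q}. In particular, the minimum distance of C is q - p^h. -/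
open Finset Polynomial in
open scoped Classical in
theorem stmt11 (p m h : ℕ) [Fact p.Prime] (hm : 0 < m) (F : Type) [Field F] [Fintype F]
    [Algebra (ZMod p) F] (hcard : Fintype.card F = p ^ m) (hh : h < m) :
    (∀ w : F → F,
      (∃ (c : F) (a : Fin (h+1) → F),
        w = fun x => c + ∑ i : Fin (h+1), a i * x ^ p ^ (i : ℕ)) → w ≠ 0 →
      ((∃ j ≤ h, (Finset.univ.filter fun x => w x ≠ 0).card = p ^ m - p ^ j) ∨
        (Finset.univ.filter fun x => w x ≠ 0).card = p ^ m)) ∧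
    IsLeast {n : ℕ | ∃ w : F → F,
      (∃ (c : F) (a : Fin (h+1) → F),
        w = fun x => c + ∑ i : Fin (h+1), a i * x ^ p ^ (i : ℕ)) ∧ w ≠ 0 ∧
      (Finset.univ.filter fun x => w x ≠ 0).card = n} (p ^ m - p ^ h) := by
  have hp : p.Prime := Fact.out
  have hp1 : 1 < p := hp.one_lt
  have hp0 : 0 < p := hp.pos
  haveI : CharP F p := charP_of_injective_algebraMap (algebraMap (ZMod p) F).injective p
  -- the additive map attached to a coefficient family
  let L : (ℕ → F) → ℕ → F →+ F := fun a N => AddMonoidHom.mk'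
    (fun x => ∑ i ∈ Finset.range N, a i * x ^ p ^ i) (by
      intro x y
      rw [← Finset.sum_add_distrib]
      exact Finset.sum_congr rfl fun i _ => by rw [add_pow_char_pow, mul_add])
  have Lapp : ∀ (a : ℕ → F) (N : ℕ) (x : F),
      L a N x = ∑ i ∈ Finset.range N, a i * x ^ p ^ i := fun _ _ _ => rfl
  -- the associated polynomial
  let P : F → (ℕ → F) → ℕ → F[X] := fun c a N =>
    Polynomial.C c + ∑ i ∈ Finset.range N, Polynomial.C (a i) * Polynomial.X ^ p ^ i
  have Peval : ∀ (c : F) (a : ℕ → F) (N : ℕ) (x : F), (P c a N).eval x = c + L a N x := by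
    intro c a N x
    simp [P, Lapp, Polynomial.eval_finset_sum]
  -- upper bound on zero sets
  have card_zero_le : ∀ (c : F) (a : ℕ → F) (N : ℕ), P c a N ≠ 0 →
      (Finset.univ.filter fun x => c + L a N x = 0).card ≤ p ^ (N - 1) := by
    intro c a N hP
    have hdeg : (P c a N).natDegree ≤ p ^ (N - 1) := by
      refine le_trans (Polynomial.natDegree_add_le _ _) (max_le (by simp) ?_)
      refine natDegree_sum_le_of_forall_le _ _ fun i hi => ?_
      refine le_trans (natDegree_C_mul_le _ _) ?_
      rw [Polynomial.natDegree_X_pow]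
      have hi' : i ≤ N - 1 := by have := Finset.mem_range.1 hi; omega
      exact Nat.pow_le_pow_right hp0 hi'
    have hsub : (Finset.univ.filter fun x => c + L a N x = 0) ⊆ (P c a N).roots.toFinset := by
      intro x hx
      rw [Finset.mem_filter] at hx
      rw [Multiset.mem_toFinset, Polynomial.mem_roots hP]
      exact (by rw [Polynomial.IsRoot, Peval]; exact hx.2)
    calc (Finset.univ.filter fun x => c + L a N x = 0).card
        ≤ (P c a N).roots.toFinset.card := Finset.card_le_card hsub
      _ ≤ Multiset.card (P c a N).roots := Multiset.toFinset_card_le _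
      _ ≤ (P c a N).natDegree := (P c a N).card_roots'
      _ ≤ p ^ (N - 1) := hdeg
  -- nonzeroness of the polynomial from a nonzero coefficient
  have Pne : ∀ (c : F) (a : ℕ → F) (N j : ℕ), j < N → a j ≠ 0 → P c a N ≠ 0 := by
    intro c a N j hj haj hP
    have := congrArg (fun Q => Polynomial.coeff Q (p ^ j)) hP
    simp only [P, Polynomial.coeff_add, Polynomial.coeff_zero, Polynomial.finset_sum_coeff,
      Polynomial.coeff_C_mul, Polynomial.coeff_X_pow, Polynomial.coeff_C] at this
    rw [if_neg (by positivity)] at this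
    have hsum : (∑ i ∈ Finset.range N, a i * if p ^ j = p ^ i then (1:F) else 0) = a j := by
      have : ∀ i ∈ Finset.range N, (a i * if p ^ j = p ^ i then (1:F) else 0)
          = if i = j then a i else 0 := by
        intro i _
        by_cases hij : i = j
        · simp [hij]
        · rw [if_neg hij, if_neg fun hpp => hij (Nat.pow_right_injective hp1 hpp.symm), mul_zero]
      rw [Finset.sum_congr rfl this, Finset.sum_ite_eq' _ j, if_pos (Finset.mem_range.2 hj)]
    rw [hsum, zero_add] at this
    exact haj this
  -- kernel cardinality is a power of p
  have card_ker : ∀ G : F →+ F, ∃ j ≤ m,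
      (Finset.univ.filter fun x => G x = 0).card = p ^ j := by
    intro G
    have h1 : (Finset.univ.filter fun x => G x = 0).card = Nat.card G.ker := by
      rw [Nat.card_eq_fintype_card]
      rw [show (Fintype.card G.ker) = Fintype.card {x : F // G x = 0} from
        Fintype.card_congr (Equiv.subtypeEquivRight fun x => AddMonoidHom.mem_ker)]
      rw [Fintype.card_subtype]
    have h2 : Nat.card G.ker ∣ p ^ m := by
      have := AddSubgroup.card_addSubgroup_dvd_card G.ker
      rwa [Nat.card_eq_fintype_card (α := F), hcard] at this
    obtain ⟨j, hj, hje⟩ := (Nat.dvd_prime_pow hp).1 h2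
    exact ⟨j, hj, by rw [h1, hje]⟩
  -- affine zero set has the same size as the kernel, given a solution
  have card_affine : ∀ (G : F →+ F) (c x0 : F), c + G x0 = 0 →
      (Finset.univ.filter fun x => c + G x = 0).card
        = (Finset.univ.filter fun x => G x = 0).card := by
    intro G c x0 h0
    refine Finset.card_bij' (fun x _ => x - x0) (fun t _ => x0 + t) ?_ ?_ ?_ ?_
    · intro x hx
      rw [Finset.mem_filter] at hx ⊢
      refine ⟨Finset.mem_univ _, ?_⟩
      rw [map_sub]
      have h1 : G x = -c := by linear_combination hx.2
      have h2 : G x0 = -c := by linear_combination h0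
      rw [h1, h2, sub_self]
    · intro t ht
      rw [Finset.mem_filter] at ht ⊢
      refine ⟨Finset.mem_univ _, ?_⟩
      rw [map_add, ht.2, add_zero]
      linear_combination h0
    · intro x _; ring
    · intro t _; ring
  -- main counting result for a single codeword
  have main : ∀ (c : F) (a : ℕ → F), (∃ x, c + L a (h+1) x ≠ 0) →
      ((∃ j ≤ h, (Finset.univ.filter fun x => ¬ (c + L a (h+1) x = 0)).card = p ^ m - p ^ j) ∨
        (Finset.univ.filter fun x => ¬ (c + L a (h+1) x = 0)).card = p ^ m) := by
    intro c a hne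
    have hcompl : (Finset.univ.filter fun x => ¬ (c + L a (h+1) x = 0)).card
        = p ^ m - (Finset.univ.filter fun x => c + L a (h+1) x = 0).card := by
      rw [Finset.filter_not, Finset.card_sdiff_of_subset (Finset.filter_subset _ _), Finset.card_univ, hcard]
    by_cases hZ : (Finset.univ.filter fun x => c + L a (h+1) x = 0).Nonempty
    · left
      obtain ⟨x0, hx0⟩ := hZ
      rw [Finset.mem_filter] at hx0
      have hPne : P c a (h+1) ≠ 0 := by
        intro hP
        obtain ⟨x, hx⟩ := hne
        exact hx (by rw [← Peval, hP, Polynomial.eval_zero])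
      have hle : (Finset.univ.filter fun x => c + L a (h+1) x = 0).card ≤ p ^ h :=
        card_zero_le c a (h+1) hPne
      obtain ⟨j, hjm, hje⟩ := card_ker (L a (h+1))
      have heq := card_affine (L a (h+1)) c x0 hx0.2
      rw [hje] at heq
      have hjh : j ≤ h := by
        have : p ^ j ≤ p ^ h := heq ▸ hle
        exact (Nat.pow_le_pow_iff_right hp1).1 this
      exact ⟨j, hjh, by rw [hcompl, heq]⟩
    · right
      rw [hcompl, Finset.not_nonempty_iff_eq_empty.1 hZ, Finset.card_empty, Nat.sub_zero]
  -- construction of a codeword with zero set of size exactly p^k, for k < m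
  have construct : ∀ k, k < m → ∃ a : ℕ → F, a k ≠ 0 ∧ (∀ i, k < i → a i = 0) ∧
      (Finset.univ.filter fun x => L a (k+1) x = 0).card = p ^ k := by
    intro k
    induction k with
    | zero =>
      intro _
      refine ⟨fun i => if i = 0 then 1 else 0, by simp, fun i hi => if_neg (by omega), ?_⟩
      have : ∀ x : F, L (fun i => if i = 0 then (1:F) else 0) 1 x = x := by
        intro x; rw [Lapp]; simp
      simp only [this, pow_zero]
      rw [show (Finset.univ.filter fun x : F => x = 0) = {0} by
        ext x; simp [Finset.mem_filter]]
      simp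
    | succ k ih =>
      intro hkm
      obtain ⟨a, hak, hahigh, hacard⟩ := ih (by omega)
      set G := L a (k+1) with hG
      -- pick v outside the kernel
      have hexv : ∃ v : F, ¬ (G v = 0) := by
        by_contra hcon
        push_neg at hcon
        have : (Finset.univ.filter fun x => G x = 0) = Finset.univ :=
          Finset.filter_true_of_mem fun x _ => hcon x
        rw [this, Finset.card_univ, hcard] at hacard
        exact absurd hacard (by
          intro hEq
          have := Nat.pow_right_injective hp1 hEq
          omega)
      obtain ⟨v, hv⟩ := hexv
      set c := G v with hc
      have hc0 : c ≠ 0 := hv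
      -- new coefficients
      set b : ℕ → F := fun i => (if 1 ≤ i then (a (i-1))^p else 0) - c^(p-1) * a i with hb
      -- functional identity
      have hfun : ∀ x, L b (k+2) x = (G x)^p - c^(p-1) * G x := by
        intro x
        rw [Lapp]
        have e1 : ∀ i ∈ Finset.range (k+2), b i * x ^ p ^ i
            = (if 1 ≤ i then (a (i-1))^p else 0) * x ^ p ^ i - c^(p-1) * (a i * x ^ p ^ i) := by
          intro i _; rw [hb]; ring
        rw [Finset.sum_congr rfl e1, Finset.sum_sub_distrib, ← Finset.mul_sum]
        have e2 : ∑ i ∈ Finset.range (k+2), a i * x ^ p ^ i = G x := by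
          rw [Finset.sum_range_succ, hahigh (k+1) (by omega), zero_mul, add_zero, hG, Lapp]
        have e3 : (∑ i ∈ Finset.range (k+2),
            (if 1 ≤ i then (a (i-1))^p else 0) * x ^ p ^ i) = (G x)^p := by
          rw [Finset.sum_range_succ']
          simp only [Nat.le_add_left 1, if_pos, Nat.add_sub_cancel, Nat.not_lt, zero_mul,
            if_neg (by omega : ¬ (1:ℕ) ≤ 0), add_zero]
          rw [hG, Lapp, sum_pow_char]
          refine Finset.sum_congr rfl fun i _ => ?_
          rw [mul_pow, ← pow_mul, ← pow_succ]
        rw [e2, e3]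
      -- top coefficient of b
      have hbk : b (k+1) ≠ 0 := by
        have hbe : b (k+1) = a k ^ p := by
          simp only [hb]
          rw [if_pos (by omega : 1 ≤ k+1), Nat.add_sub_cancel, hahigh (k+1) (by omega),
            mul_zero, sub_zero]
        rw [hbe]
        exact pow_ne_zero _ hak
      have hbhigh : ∀ i, k+1 < i → b i = 0 := by
        intro i hi
        simp only [hb]
        rw [if_pos (by omega : 1 ≤ i), hahigh (i-1) (by omega), hahigh i (by omega),
          zero_pow hp.ne_zero, mul_zero, sub_zero]
      -- upper bound
      have hup : (Finset.univ.filter fun x => L b (k+2) x = 0).card ≤ p ^ (k+1) := by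
        have := card_zero_le 0 b (k+2) (Pne 0 b (k+2) (k+1) (by omega) hbk)
        simpa using this
      -- lower bound via translates
      have hlow : p ^ (k+1) ≤ (Finset.univ.filter fun x => L b (k+2) x = 0).card := by
        have himg : ((Finset.range p) ×ˢ (Finset.univ.filter fun x => G x = 0)).image
            (fun nt : ℕ × F => (nt.1 : F) * v + nt.2)
            ⊆ (Finset.univ.filter fun x => L b (k+2) x = 0) := by
          intro y hy
          rw [Finset.mem_image] at hy
          obtain ⟨⟨n, t⟩, hnt, rfl⟩ := hy
          rw [Finset.mem_product, Finset.mem_filter] at hnt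
          rw [Finset.mem_filter]
          refine ⟨Finset.mem_univ _, ?_⟩
          rw [hfun]
          have hGt : G t = 0 := hnt.2.2
          have hGn : G ((n : F) * v + t) = (n : F) * c := by
            rw [map_add, hGt, add_zero]
            rw [show ((n : F) * v) = n • v from (nsmul_eq_mul n v).symm, map_nsmul,
              nsmul_eq_mul, hc]
          rw [hGn]
          have hnp : ((n : F))^p = (n : F) := by
            have := map_natCast (frobenius F p) n
            rwa [frobenius_def] at this
          have hcp : c ^ p = c ^ (p-1) * c := by
            rw [← pow_succ]
            congr 1
            omega
          rw [mul_pow, hnp, hcp]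
          ring
        have hinj : Set.InjOn (fun nt : ℕ × F => (nt.1 : F) * v + nt.2)
            (((Finset.range p) ×ˢ (Finset.univ.filter fun x => G x = 0) : Finset (ℕ × F)) : Set (ℕ × F)) := by
          rintro ⟨n1, t1⟩ h1 ⟨n2, t2⟩ h2 heq
          simp only [Finset.mem_coe, Finset.mem_product, Finset.mem_range,
            Finset.mem_filter] at h1 h2
          simp only at heq
          have hGheq := congrArg G heq
          rw [map_add, map_add, h1.2.2, h2.2.2, add_zero, add_zero,
            show ((n1 : F) * v) = n1 • v from (nsmul_eq_mul n1 v).symm, map_nsmul,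
            show ((n2 : F) * v) = n2 • v from (nsmul_eq_mul n2 v).symm, map_nsmul,
            nsmul_eq_mul, nsmul_eq_mul, ← hc] at hGheq
          have hn : n1 = n2 := by
            have hcast : (n1 : F) = n2 := mul_right_cancel₀ hc0 hGheq
            exact CharP.natCast_injOn_Iio F p h1.1 h2.1 hcast
          subst hn
          have : t1 = t2 := by
            have := heq
            exact add_left_cancel this
          rw [this]
        have hcount : (((Finset.range p) ×ˢ (Finset.univ.filter fun x => G x = 0)).image
            (fun nt : ℕ × F => (nt.1 : F) * v + nt.2)).card = p ^ (k+1) := by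
          rw [Finset.card_image_of_injOn hinj, Finset.card_product, Finset.card_range, hacard]
          ring
        calc p ^ (k+1) = _ := hcount.symm
          _ ≤ _ := Finset.card_le_card himg
      refine ⟨b, hbk, hbhigh, le_antisymm hup hlow⟩
  -- now assemble everything
  have part1 : ∀ w : F → F,
      (∃ (c : F) (a : Fin (h+1) → F),
        w = fun x => c + ∑ i : Fin (h+1), a i * x ^ p ^ (i : ℕ)) → w ≠ 0 →
      ((∃ j ≤ h, (Finset.univ.filter fun x => w x ≠ 0).card = p ^ m - p ^ j) ∨
        (Finset.univ.filter fun x => w x ≠ 0).card = p ^ m) := by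
    rintro w ⟨c, a, rfl⟩ hw
    set a' : ℕ → F := fun i => if hi : i < h+1 then a ⟨i, hi⟩ else 0 with ha'
    have hrew : ∀ x : F, c + ∑ i : Fin (h+1), a i * x ^ p ^ (i : ℕ) = c + L a' (h+1) x := by
      intro x
      rw [Lapp, ← Fin.sum_univ_eq_sum_range (fun i => a' i * x ^ p ^ i) (h+1)]
      congr 1
      refine Finset.sum_congr rfl fun i _ => ?_
      rw [ha']
      simp [i.isLt]
    have hne : ∃ x, c + L a' (h+1) x ≠ 0 := by
      by_contra hcon
      push_neg at hcon
      exact hw (funext fun x => by rw [hrew x, hcon x]; rfl)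
    have := main c a' hne
    simp only [← hrew] at this
    exact this
  refine ⟨part1, ?_, ?_⟩
  · -- membership: the constructed codeword
    obtain ⟨a, hah, hahigh, hacard⟩ := construct h hh
    refine ⟨fun x => (0:F) + ∑ i : Fin (h+1), a i * x ^ p ^ (i : ℕ),
      ⟨0, fun i => a i, rfl⟩, ?_, ?_⟩
    · -- nonzero
      intro hzero
      have hfx : ∀ x : F, L a (h+1) x = 0 := by
        intro x
        have := congrFun hzero x
        simp only [Pi.zero_apply, zero_add] at this
        rw [Lapp]
        rw [← Fin.sum_univ_eq_sum_range (fun i => a i * x ^ p ^ i) (h+1)]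
        exact this
      have : (Finset.univ.filter fun x => L a (h+1) x = 0) = Finset.univ :=
        Finset.filter_true_of_mem fun x _ => hfx x
      rw [this, Finset.card_univ, hcard] at hacard
      have := Nat.pow_right_injective hp1 hacard
      omega
    · -- weight
      have hrew : ∀ x : F, ((0:F) + ∑ i : Fin (h+1), a i * x ^ p ^ (i : ℕ)) = L a (h+1) x := by
        intro x
        rw [zero_add, Lapp, ← Fin.sum_univ_eq_sum_range (fun i => a i * x ^ p ^ i) (h+1)]
      have : (Finset.univ.filter fun x : F =>
          ¬ ((0:F) + ∑ i : Fin (h+1), a i * x ^ p ^ (i : ℕ)) = 0).card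
          = p ^ m - (Finset.univ.filter fun x : F =>
            ((0:F) + ∑ i : Fin (h+1), a i * x ^ p ^ (i : ℕ)) = 0).card := by
        rw [Finset.filter_not, Finset.card_sdiff_of_subset (Finset.filter_subset _ _),
          Finset.card_univ, hcard]
      rw [this]
      congr 1
      rw [← hacard]
      exact Finset.card_nbij id (fun x hx => by
          rw [Finset.mem_coe, Finset.mem_filter] at hx
          rw [Finset.mem_coe, Finset.mem_filter]
          exact ⟨Finset.mem_univ _, by show (L a (h+1)) x = 0; rw [← hrew x]; exact hx.2⟩)
        (fun x _ y _ hxy => hxy)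
        (fun x hx => by
          rw [Finset.mem_coe, Finset.mem_filter] at hx
          exact ⟨x, Finset.mem_filter.2 ⟨Finset.mem_univ _, by rw [hrew x]; exact hx.2⟩, rfl⟩)
  · -- lower bound
    rintro n ⟨w, hwrep, hwne, rfl⟩
    rcases part1 w hwrep hwne with ⟨j, hj, he⟩ | he
    · rw [he]
      exact Nat.sub_le_sub_left (Nat.pow_le_pow_right hp0 hj) _
    · rw [he]
      exact Nat.sub_le _ _
end

section
/- Let p be prime, q = p^m, h < m, and 0 <= j <= h. The number of distinct sets of the form N(f) (a coset of a j-dimensional F_p-subspace) arising as root sets of affine p-polynomials f(x) = c + sum_{i=0}^h a_i x^{p^i} with |N(f)| = p^j equals [m choose j]_p * p^{m-j}, i.e., every coset of every j-dimensional subspace arises as such a root set. -/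
set_option linter.unusedSectionVars false
set_option maxHeartbeats 1000000

lemma gaussBinom_zero_right (p n : ℕ) : gaussBinom p n 0 = 1 := by cases n <;> rfl

lemma gaussBinom_eq_zero (p : ℕ) : ∀ {n k : ℕ}, n < k → gaussBinom p n k = 0 := by
  intro n
  induction n with
  | zero => intro k hk; match k, hk with | k+1, _ => rfl
  | succ n ih =>
    intro k hk
    match k, hk with
    | k+1, hk =>
      show gaussBinom p n k + p^(k+1) * gaussBinom p n (k+1) = 0
      rw [ih (by omega), ih (by omega)]; simp

lemma gaussBinom_self (p : ℕ) : ∀ n, gaussBinom p n n = 1 := by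
  intro n
  induction n with
  | zero => rfl
  | succ n ih =>
    show gaussBinom p n n + p^(n+1) * gaussBinom p n (n+1) = 1
    rw [ih, gaussBinom_eq_zero p (by omega)]; simp

/-- `A p n k = ∏_{i<k} (p^n - p^i)` over ℤ. -/
def gA (p n k : ℕ) : ℤ := ∏ i ∈ Finset.range k, ((p:ℤ)^n - (p:ℤ)^i)

lemma gA_succ_succ (p n k : ℕ) : gA p (n+1) (k+1) = ((p:ℤ)^(n+1) - 1) * (p:ℤ)^k * gA p n k := by
  unfold gA
  rw [Finset.prod_range_succ' (fun i => ((p:ℤ)^(n+1) - (p:ℤ)^i)) k]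
  have : ∀ i, ((p:ℤ)^(n+1) - (p:ℤ)^(i+1)) = (p:ℤ) * ((p:ℤ)^n - (p:ℤ)^i) := by
    intro i; ring
  rw [Finset.prod_congr rfl (fun i _ => this i), Finset.prod_mul_distrib,
    Finset.prod_const, Finset.card_range]
  ring

lemma gA_succ (p n k : ℕ) : gA p n (k+1) = gA p n k * ((p:ℤ)^n - (p:ℤ)^k) :=
  Finset.prod_range_succ _ k

lemma gauss_key (p : ℕ) : ∀ n k, k ≤ n → (gaussBinom p n k : ℤ) * gA p k k = gA p n k := by
  intro n
  induction n with
  | zero => intro k hk; interval_cases k; simp [gaussBinom, gA]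
  | succ n ih =>
    intro k hk
    match k with
    | 0 => simp [gaussBinom_zero_right, gA]
    | k+1 =>
      rcases Nat.lt_or_ge k n with hkn | hkn
      · show ((gaussBinom p n k + p^(k+1) * gaussBinom p n (k+1) : ℕ) : ℤ) * gA p (k+1) (k+1) = _
        push_cast
        have h1 := ih k (by omega)
        have h2 := ih (k+1) hkn
        rw [gA_succ_succ p k k] at h2 ⊢
        rw [gA_succ p n k] at h2
        rw [gA_succ_succ p n k]
        linear_combination ((p:ℤ)^(k+1)-1)*(p:ℤ)^k*h1 + (p:ℤ)^(k+1)*h2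
      · have hk : k = n := by omega
        subst hk
        rw [show gaussBinom p (k+1) (k+1) = 1 from gaussBinom_self p (k+1)]
        simp

section secCount

open Module Submodule Set

section count
variable {K V : Type*} [Field K] [AddCommGroup V] [Module K V] [Fintype K] [Finite V]

attribute [local instance] Fintype.ofFinite

noncomputable def fiberEquiv (j : ℕ) (U : Submodule K V) (hU : finrank K ↥U = j) :
    { s : { s : Fin j → V // LinearIndependent K s } // span K (range s.1) = U } ≃
      { t : Fin j → ↥U // LinearIndependent K t } where
  toFun s := ⟨fun i => ⟨s.1.1 i, (le_of_eq s.2) (subset_span (mem_range_self i))⟩, by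
    apply LinearIndependent.of_comp U.subtype
    exact s.1.2⟩
  invFun t := ⟨⟨fun i => (t.1 i : V), t.2.map' U.subtype (ker_subtype _)⟩, by
    have h1 : span K (range t.1) = ⊤ := by
      apply t.2.span_eq_top_of_card_eq_finrank'
      simp [hU]
    have h2 : (range fun i => ((t.1 i : V))) = U.subtype '' (range t.1) := by
      ext x; simp
    rw [h2, span_image, h1, Submodule.map_subtype_top]⟩
  left_inv s := Subtype.ext (Subtype.ext rfl)
  right_inv t := Subtype.ext (funext fun i => Subtype.ext rfl)

theorem subspace_count (j : ℕ) (hj : j ≤ finrank K V) :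
    Nat.card {U : Submodule K V // finrank K U = j} *
      ∏ i : Fin j, (Fintype.card K ^ j - Fintype.card K ^ (i : ℕ)) =
    ∏ i : Fin j, (Fintype.card K ^ (finrank K V) - Fintype.card K ^ (i : ℕ)) := by
  classical
  have h1 := card_linearIndependent (K := K) (V := V) hj
  have e : { s : Fin j → V // LinearIndependent K s } ≃
      Σ U : {U : Submodule K V // finrank K U = j},
        { t : Fin j → ↥U.1 // LinearIndependent K t } := by
    refine (Equiv.sigmaFiberEquiv (fun s : {s : Fin j → V // LinearIndependent K s} =>
      (⟨span K (range s.1), by rw [finrank_span_eq_card s.2, Fintype.card_fin]⟩ :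
        {U : Submodule K V // finrank K U = j}))).symm.trans ?_
    exact Equiv.sigmaCongrRight (fun U =>
      (Equiv.subtypeEquivRight (fun s => by rw [Subtype.ext_iff])).trans (fiberEquiv j U.1 U.2))
  rw [← h1, Nat.card_congr e]
  simp only [Nat.card_eq_fintype_card]
  rw [Fintype.card_sigma]
  have h2 : ∀ U : {U : Submodule K V // finrank K U = j},
      Fintype.card {t : Fin j → ↥U.1 // LinearIndependent K t} =
        ∏ i : Fin j, (Fintype.card K ^ j - Fintype.card K ^ (i : ℕ)) := by
    intro U
    rw [← Nat.card_eq_fintype_card, card_linearIndependent (by rw [U.2]), U.2]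
  simp_rw [h2]
  rw [Finset.sum_const, smul_eq_mul, Finset.card_univ]
end count


section secField

open Module Submodule Set Polynomial

variable {p : ℕ} [Fact p.Prime] {F : Type} [Field F] [Fintype F] [Algebra (ZMod p) F]

theorem charPF : CharP F p :=
  charP_of_injective_algebraMap (algebraMap (ZMod p) F).injective p

lemma pow_p_eq_iff (z : F) : z ^ p = z ↔ ∃ c : ZMod p, algebraMap (ZMod p) F c = z := by
  classical
  constructor
  · intro hz
    have hp1 : 1 < p := (Fact.out : p.Prime).one_lt
    set φ := algebraMap (ZMod p) F
    set f : F[X] := X ^ p - X with hf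
    have hf0 : f ≠ 0 := FiniteField.X_pow_card_sub_X_ne_zero F hp1
    have hroot : ∀ c : ZMod p, IsRoot f (φ c) := by
      intro c
      simp only [IsRoot, hf, eval_sub, eval_pow, eval_X, ← map_pow, ZMod.pow_card, sub_self]
    set T : Finset F := Finset.univ.image φ with hT
    have hTsub : T ⊆ f.roots.toFinset := by
      intro t ht
      rw [hT, Finset.mem_image] at ht
      obtain ⟨c, -, rfl⟩ := ht
      rw [Multiset.mem_toFinset, mem_roots hf0]
      exact hroot c
    have hTcard : T.card = p := by
      rw [hT, Finset.card_image_of_injective _ (algebraMap (ZMod p) F).injective,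
        Finset.card_univ, ZMod.card]
    have hcard : f.roots.toFinset.card ≤ p := by
      calc f.roots.toFinset.card ≤ Multiset.card f.roots := f.roots.toFinset_card_le
        _ ≤ f.natDegree := f.card_roots'
        _ = p := FiniteField.X_pow_card_sub_X_natDegree_eq F hp1
    have hTeq : T = f.roots.toFinset :=
      Finset.eq_of_subset_of_card_le hTsub (hTcard ▸ hcard)
    have hzmem : z ∈ f.roots.toFinset := by
      rw [Multiset.mem_toFinset, mem_roots hf0]
      simp [IsRoot, hf, hz, sub_self]
    rw [← hTeq, hT, Finset.mem_image] at hzmem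
    obtain ⟨c, -, hc⟩ := hzmem
    exact ⟨c, hc⟩
  · rintro ⟨c, rfl⟩
    rw [← map_pow, ZMod.pow_card]

lemma keyE : ∀ (k : ℕ) (W : Submodule (ZMod p) F), finrank (ZMod p) W = k →
    ∃ g : ℕ → F, ∀ x : F, (∑ i ∈ Finset.range (k+1), g i * x ^ p ^ i = 0) ↔ x ∈ W := by
  haveI : CharP F p := charPF
  intro k
  induction k with
  | zero =>
    intro W hW
    rw [Submodule.finrank_eq_zero] at hW
    subst hW
    exact ⟨fun _ => 1, fun x => by simp⟩
  | succ k ih =>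
    intro W hW
    let β := (Module.finBasis (ZMod p) ↥W).reindex (finCongr (by rw [hW]))
    set v : Fin (k+1) → F := fun i => ((β i : ↥W) : F) with hvdef
    have hv : LinearIndependent (ZMod p) v :=
      β.linearIndependent.map' W.subtype (Submodule.ker_subtype _)
    have hspan : span (ZMod p) (range v) = W := by
      have h : range v = W.subtype '' (range β) := by ext x; simp [hvdef]
      rw [h, span_image, β.span_eq, Submodule.map_subtype_top]
    set W' : Submodule (ZMod p) F := span (ZMod p) (range (v ∘ Fin.castSucc)) with hW'def
    set b : F := v (Fin.last k) with hbdef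
    have hW' : finrank (ZMod p) ↥W' = k := by
      rw [hW'def, finrank_span_eq_card (hv.comp _ (Fin.castSucc_injective k)),
        Fintype.card_fin]
    have hb : b ∉ W' := by
      have h := (linearIndependent_fin_succ'.mp hv).2
      exact h
    have hmem : ∀ x : F, x ∈ W ↔ ∃ c : ZMod p, x - c • b ∈ W' := by
      intro x
      rw [← hspan]
      have hrange : range v = insert b (range (v ∘ Fin.castSucc)) := by
        ext y
        simp only [Set.mem_insert_iff, Set.mem_range]
        constructor
        · rintro ⟨i, rfl⟩
          rcases Fin.eq_castSucc_or_eq_last i with ⟨j, rfl⟩ | rfl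
          · right; exact ⟨j, rfl⟩
          · left; rfl
        · rintro (rfl | ⟨j, rfl⟩)
          · exact ⟨Fin.last k, rfl⟩
          · exact ⟨j.castSucc, rfl⟩
      rw [hrange, Submodule.mem_span_insert]
      constructor
      · rintro ⟨a, z, hz, rfl⟩; exact ⟨a, by simpa using hz⟩
      · rintro ⟨c, hc⟩; exact ⟨c, x - c • b, hc, by abel⟩
    obtain ⟨g, hg⟩ := ih W' hW'
    set L : F → F := fun x => ∑ i ∈ Finset.range (k+1), g i * x ^ p ^ i with hLdef
    have hLsub : ∀ x y : F, L (x - y) = L x - L y := by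
      intro x y
      simp only [hLdef]
      rw [← Finset.sum_sub_distrib]
      refine Finset.sum_congr rfl fun i _ => ?_
      rw [sub_pow_char_pow]; ring
    have hLsmul : ∀ (c : ZMod p) (x : F), L (c • x) = algebraMap (ZMod p) F c * L x := by
      intro c x
      simp only [hLdef, Finset.mul_sum]
      refine Finset.sum_congr rfl fun i _ => ?_
      rw [Algebra.smul_def, mul_pow, ← map_pow, ZMod.pow_card_pow]
      ring
    set w : F := L b with hwdef
    have hw : w ≠ 0 := fun h => hb ((hg b).mp h)
    obtain ⟨pp, hpp⟩ : ∃ pp, p = pp + 1 := ⟨p - 1, by have := (Fact.out : p.Prime).pos; omega⟩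
    refine ⟨fun i => (if 1 ≤ i then (g (i-1))^p else 0) - w^(p-1) * (if i ≤ k then g i else 0),
      fun x => ?_⟩
    have hsum : ∑ i ∈ Finset.range (k+1+1),
        ((if 1 ≤ i then (g (i-1))^p else 0) - w^(p-1) * (if i ≤ k then g i else 0)) * x ^ p ^ i
        = (L x)^p - w^(p-1) * L x := by
      have e1 : ∑ i ∈ Finset.range (k+2), (if 1 ≤ i then (g (i-1))^p else 0) * x ^ p ^ i
          = (L x)^p := by
        rw [Finset.sum_range_succ']
        simp only [Nat.le_zero, if_neg (by omega : ¬ (1:ℕ) ≤ 0), zero_mul, add_zero]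
        have h1 : ∀ i, (if 1 ≤ i+1 then (g (i+1-1))^p else 0) * x ^ p ^ (i+1)
            = (g i * x ^ p ^ i)^p := by
          intro i
          rw [if_pos (by omega : 1 ≤ i+1), Nat.add_sub_cancel, mul_pow, ← pow_mul, ← pow_succ]
        rw [Finset.sum_congr rfl (fun i _ => h1 i), ← sum_pow_char]
        simp [hLdef]
      have e2 : ∑ i ∈ Finset.range (k+2), (if i ≤ k then g i else 0) * x ^ p ^ i = L x := by
        rw [Finset.sum_range_succ, if_neg (by omega : ¬ k+1 ≤ k), zero_mul, add_zero]
        refine Finset.sum_congr rfl fun i hi => ?_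
        rw [if_pos (by have := Finset.mem_range.mp hi; omega)]
      calc ∑ i ∈ Finset.range (k+1+1),
          ((if 1 ≤ i then (g (i-1))^p else 0) - w^(p-1) * (if i ≤ k then g i else 0)) * x ^ p ^ i
          = ∑ i ∈ Finset.range (k+2), ((if 1 ≤ i then (g (i-1))^p else 0) * x ^ p ^ i
            - w^(p-1) * ((if i ≤ k then g i else 0) * x ^ p ^ i)) := by
            refine Finset.sum_congr rfl fun i _ => ?_; ring
        _ = (L x)^p - w^(p-1) * L x := by
            rw [Finset.sum_sub_distrib, ← Finset.mul_sum, e1, e2]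
    beta_reduce
    rw [hsum]
    have hiff : ((L x)^p - w^(p-1) * L x = 0) ↔
        ∃ c : ZMod p, L x = algebraMap (ZMod p) F c * w := by
      constructor
      · intro hzero
        have hy : (L x) ^ p = w^(p-1) * L x := by
          have := sub_eq_zero.mp hzero; exact this
        have h2 : (L x / w)^p = L x / w := by
          rw [div_pow, hy, div_eq_div_iff (pow_ne_zero _ hw) hw]
          subst hpp
          simp only [Nat.add_sub_cancel]
          ring
        obtain ⟨c, hc⟩ := (pow_p_eq_iff (L x / w)).mp h2
        exact ⟨c, by rw [hc, div_mul_cancel₀ _ hw]⟩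
      · rintro ⟨c, hc⟩
        rw [hc, mul_pow, ← map_pow, ZMod.pow_card]
        subst hpp
        simp only [Nat.add_sub_cancel]
        ring
    rw [hiff]
    constructor
    · rintro ⟨c, hc⟩
      apply (hmem x).mpr
      refine ⟨c, (hg _).mp ?_⟩
      show L (x - c • b) = 0
      rw [hLsub, hc, hLsmul, hwdef]
      ring
    · intro hx
      obtain ⟨c, hc⟩ := (hmem x).mp hx
      have h0 : L (x - c • b) = 0 := (hg _).mpr hc
      rw [hLsub, hLsmul] at h0
      exact ⟨c, by rw [sub_eq_zero] at h0; exact h0⟩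

end secField

section secCoset

open Module Submodule Set
variable {p : ℕ} [Fact p.Prime] {F : Type} [Field F] [Fintype F] [Algebra (ZMod p) F]

attribute [local instance] Fintype.ofFinite

/-- the coset map on the quotient -/
noncomputable def cosetOf (U : Submodule (ZMod p) F) : F ⧸ U → Set F :=
  fun q => Quotient.liftOn' q (fun x0 => {x : F | x - x0 ∈ U}) (by
    intro a b hab
    rw [Submodule.quotientRel_def] at hab
    ext x
    simp only [Set.mem_setOf_eq]
    constructor
    · intro h; have := U.add_mem h hab; rwa [sub_add_sub_cancel] at this
    · intro h; have := U.sub_mem h hab; rwa [sub_sub_sub_cancel_right] at this)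

lemma cosetOf_mk (U : Submodule (ZMod p) F) (x0 : F) :
    cosetOf U (Submodule.Quotient.mk x0) = {x : F | x - x0 ∈ U} := rfl

lemma coset_count (j : ℕ) :
    Nat.card {S : Set F // ∃ U : Submodule (ZMod p) F, finrank (ZMod p) ↥U = j ∧
        ∃ x0 : F, S = {x : F | x - x0 ∈ U}} =
      Nat.card {U : Submodule (ZMod p) F // finrank (ZMod p) ↥U = j} *
        p ^ (finrank (ZMod p) F - j) := by
  classical
  set P : Set F → Prop := fun S => ∃ U : Submodule (ZMod p) F, finrank (ZMod p) ↥U = j ∧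
        ∃ x0 : F, S = {x : F | x - x0 ∈ U} with hP
  have hΦ : ∀ (x : Σ U : {U : Submodule (ZMod p) F // finrank (ZMod p) ↥U = j}, F ⧸ U.1),
      P (cosetOf x.1.1 x.2) := by
    rintro ⟨⟨U, hU⟩, q⟩
    obtain ⟨x0, rfl⟩ := Submodule.Quotient.mk_surjective U q
    exact ⟨U, hU, x0, rfl⟩
  set Φ : (Σ U : {U : Submodule (ZMod p) F // finrank (ZMod p) ↥U = j}, F ⧸ U.1) →
      {S : Set F // P S} := fun x => ⟨cosetOf x.1.1 x.2, hΦ x⟩ with hΦdef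
  have hbij : Function.Bijective Φ := by
    constructor
    · rintro ⟨⟨U, hU⟩, q⟩ ⟨⟨U', hU'⟩, q'⟩ heq
      obtain ⟨x0, rfl⟩ := Submodule.Quotient.mk_surjective U q
      obtain ⟨x1, rfl⟩ := Submodule.Quotient.mk_surjective U' q'
      have hset : {x : F | x - x0 ∈ U} = {x : F | x - x1 ∈ U'} := congrArg Subtype.val heq
      have h10 : x1 - x0 ∈ U := by
        have : x1 ∈ {x : F | x - x1 ∈ U'} := by simp
        rw [← hset] at this; exact this
      have hUU : U = U' := by
        ext u
        constructor
        · intro hu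
          have : u + x1 ∈ {x : F | x - x0 ∈ U} := by
            simpa [add_sub_assoc] using U.add_mem hu h10
          rw [hset] at this; simpa using this
        · intro hu
          have : u + x1 ∈ {x : F | x - x1 ∈ U'} := by simpa using hu
          rw [← hset] at this
          have h2 : u + x1 - x0 ∈ U := this
          have := U.sub_mem h2 h10
          simpa using this
      subst hUU
      have hq : x0 - x1 ∈ U := by
        have : x0 ∈ {x : F | x - x0 ∈ U} := by simp
        rw [hset] at this; exact this
      refine Sigma.ext rfl ?_
      simp only [heq_eq_eq]
      rw [Submodule.Quotient.eq]
      exact hq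
    · rintro ⟨S, U, hU, x0, rfl⟩
      exact ⟨⟨⟨U, hU⟩, Submodule.Quotient.mk x0⟩, rfl⟩
  rw [← Nat.card_eq_of_bijective Φ hbij]
  simp only [Nat.card_eq_fintype_card]
  rw [Fintype.card_sigma]
  have hcq : ∀ U : {U : Submodule (ZMod p) F // finrank (ZMod p) ↥U = j},
      Fintype.card (F ⧸ U.1) = p ^ (finrank (ZMod p) F - j) := by
    rintro ⟨U, hU⟩
    have h1 : finrank (ZMod p) (F ⧸ U) = finrank (ZMod p) F - j := by
      have := Submodule.finrank_quotient_add_finrank U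
      omega
    rw [card_eq_pow_finrank (K := ZMod p) (V := F ⧸ U), ZMod.card, h1]
  simp_rw [hcq]
  rw [Finset.sum_const, smul_eq_mul, Finset.card_univ]

end secCoset

section secGlue

open Module Submodule Set

variable {p : ℕ} [Fact p.Prime] {F : Type} [Field F] [Fintype F] [Algebra (ZMod p) F]

section glue
attribute [local instance] Fintype.ofFinite

lemma stmtLadd (g : ℕ → F) (k : ℕ) (x y : F) :
    ∑ i ∈ Finset.range k, g i * (x + y) ^ p ^ i
      = ∑ i ∈ Finset.range k, g i * x ^ p ^ i + ∑ i ∈ Finset.range k, g i * y ^ p ^ i := by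
  have : CharP F p := charP_of_injective_algebraMap (algebraMap (ZMod p) F).injective p
  rw [← Finset.sum_add_distrib]
  exact Finset.sum_congr rfl fun i _ => by rw [add_pow_char_pow]; ring

lemma stmtLsub (g : ℕ → F) (k : ℕ) (x y : F) :
    ∑ i ∈ Finset.range k, g i * (x - y) ^ p ^ i
      = ∑ i ∈ Finset.range k, g i * x ^ p ^ i - ∑ i ∈ Finset.range k, g i * y ^ p ^ i := by
  have : CharP F p := charP_of_injective_algebraMap (algebraMap (ZMod p) F).injective p
  rw [← Finset.sum_sub_distrib]
  exact Finset.sum_congr rfl fun i _ => by rw [sub_pow_char_pow]; ring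

lemma stmtLsmul (g : ℕ → F) (k : ℕ) (c : ZMod p) (x : F) :
    ∑ i ∈ Finset.range k, g i * (c • x) ^ p ^ i
      = algebraMap (ZMod p) F c * ∑ i ∈ Finset.range k, g i * x ^ p ^ i := by
  rw [Finset.mul_sum]
  refine Finset.sum_congr rfl fun i _ => ?_
  rw [Algebra.smul_def, mul_pow, ← map_pow, ZMod.pow_card_pow]
  ring

/-- The kernel of a linearized polynomial, as a submodule. -/
def kerSub (g : ℕ → F) (k : ℕ) : Submodule (ZMod p) F where
  carrier := {x : F | ∑ i ∈ Finset.range k, g i * x ^ p ^ i = 0}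
  zero_mem' := by
    have hp0 : ∀ i : ℕ, p ^ i ≠ 0 := fun i => (pow_pos (Fact.out : p.Prime).pos i).ne'
    simp only [Set.mem_setOf_eq]
    rw [Finset.sum_eq_zero]
    intro i _
    rw [zero_pow (hp0 i), mul_zero]
  add_mem' := by
    intro x y hx hy
    simp only [Set.mem_setOf_eq] at *
    rw [stmtLadd, hx, hy, add_zero]
  smul_mem' := by
    intro c x hx
    simp only [Set.mem_setOf_eq] at *
    rw [stmtLsmul, hx, mul_zero]

lemma mem_kerSub (g : ℕ → F) (k : ℕ) (x : F) :
    x ∈ (kerSub g k : Submodule (ZMod p) F) ↔ ∑ i ∈ Finset.range k, g i * x ^ p ^ i = 0 := Iff.rfl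

lemma card_coset (U : Submodule (ZMod p) F) (x0 : F) :
    Nat.card {x : F | x - x0 ∈ U} = Nat.card ↥U :=
  Nat.card_congr
    ⟨fun x => ⟨x.1 - x0, x.2⟩, fun u => ⟨x0 + u.1, by simp [u.2]⟩,
      fun x => Subtype.ext (by simp), fun u => Subtype.ext (by simp)⟩

lemma image_coset (U : Submodule (ZMod p) F) (x0 : F) :
    (x0 + ·) '' (U : Set F) = {x : F | x - x0 ∈ U} := by
  ext x
  constructor
  · rintro ⟨u, hu, rfl⟩; simpa using hu
  · intro hx; exact ⟨x - x0, hx, by show x0 + (x - x0) = x; ring⟩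

lemma finrank_of_card {j : ℕ} (U : Submodule (ZMod p) F) (hU : Nat.card ↥U = p ^ j) :
    finrank (ZMod p) ↥U = j := by
  have h := card_eq_pow_finrank (K := ZMod p) (V := ↥U)
  rw [ZMod.card, ← Nat.card_eq_fintype_card, hU] at h
  exact (Nat.pow_right_injective (Fact.out : p.Prime).two_le h).symm

lemma card_of_finrank {j : ℕ} (U : Submodule (ZMod p) F) (hU : finrank (ZMod p) ↥U = j) :
    Nat.card ↥U = p ^ j := by
  have h := card_eq_pow_finrank (K := ZMod p) (V := ↥U)
  rw [ZMod.card, ← Nat.card_eq_fintype_card, hU] at h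
  exact h

end glue

end secGlue

section secMain
open Module Submodule Set
attribute [local instance] Fintype.ofFinite
variable {p : ℕ} [Fact p.Prime] {F : Type} [Field F] [Fintype F] [Algebra (ZMod p) F]

lemma sum_trunc (g : ℕ → F) (j k : ℕ) (hjk : j + 1 ≤ k + 1) (x : F) :
    ∑ i ∈ Finset.range (k+1), (if i < j+1 then g i else 0) * x ^ p ^ i
      = ∑ i ∈ Finset.range (j+1), g i * x ^ p ^ i := by
  rw [← Finset.sum_subset (Finset.range_subset_range.mpr hjk)
    (fun i _ hni => by
      rw [if_neg (fun hij => hni (Finset.mem_range.mpr hij)), zero_mul])]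
  exact Finset.sum_congr rfl fun i hi => by rw [if_pos (Finset.mem_range.mp hi)]

lemma construct (j k : ℕ) (hjk : j ≤ k) (U : Submodule (ZMod p) F)
    (hU : finrank (ZMod p) ↥U = j) (x0 : F) :
    ∃ (c : F) (a : Fin (k+1) → F),
      {x : F | c + ∑ i : Fin (k+1), a i * x ^ p ^ (i : ℕ) = 0} = {x : F | x - x0 ∈ U} := by
  obtain ⟨g, hg⟩ := keyE j U hU
  refine ⟨-(∑ i ∈ Finset.range (j+1), g i * x0 ^ p ^ i),
    fun i => if (i : ℕ) < j+1 then g i else 0, ?_⟩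
  ext x
  simp only [Set.mem_setOf_eq]
  rw [Fin.sum_univ_eq_sum_range (fun i => (if i < j+1 then g i else 0) * x ^ p ^ i) (k+1),
    sum_trunc g j k (by omega) x]
  rw [← hg (x - x0), stmtLsub]
  constructor
  · intro hh; linear_combination hh
  · intro hh; linear_combination hh

lemma root_is_coset {k : ℕ} (c : F) (a : Fin (k+1) → F) {j : ℕ}
    (hS : Nat.card {x : F | c + ∑ i : Fin (k+1), a i * x ^ p ^ (i:ℕ) = 0} = p ^ j) :
    ∃ U : Submodule (ZMod p) F, finrank (ZMod p) ↥U = j ∧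
      ∃ x0 : F, {x : F | c + ∑ i : Fin (k+1), a i * x ^ p ^ (i:ℕ) = 0}
        = {x : F | x - x0 ∈ U} := by
  classical
  set a' : ℕ → F := fun i => if hi : i < k+1 then a ⟨i, hi⟩ else 0 with ha'
  have hfs : ∀ x : F, ∑ i : Fin (k+1), a i * x ^ p ^ (i:ℕ)
      = ∑ i ∈ Finset.range (k+1), a' i * x ^ p ^ i := by
    intro x
    rw [← Fin.sum_univ_eq_sum_range (fun i => a' i * x ^ p ^ i) (k+1)]
    refine Finset.sum_congr rfl fun i _ => ?_
    simp [ha', i.isLt]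
    intro hki; exact absurd hki (Nat.not_lt.mpr (Nat.lt_succ_iff.mp i.isLt))
  have hne : {x : F | c + ∑ i : Fin (k+1), a i * x ^ p ^ (i:ℕ) = 0}.Nonempty := by
    rw [← Set.nonempty_coe_sort]
    have h0 : Nat.card {x : F | c + ∑ i : Fin (k+1), a i * x ^ p ^ (i:ℕ) = 0} ≠ 0 := by
      rw [hS]
      exact (pow_pos (Fact.out : p.Prime).pos j).ne'
    exact (Nat.card_ne_zero.mp h0).1
  obtain ⟨x0, hx0⟩ := hne
  have hc : c = -(∑ i ∈ Finset.range (k+1), a' i * x0 ^ p ^ i) := by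
    have h1 : c + ∑ i : Fin (k+1), a i * x0 ^ p ^ (i:ℕ) = 0 := hx0
    rw [hfs] at h1
    exact eq_neg_of_add_eq_zero_left h1
  have hSeq : {x : F | c + ∑ i : Fin (k+1), a i * x ^ p ^ (i:ℕ) = 0}
      = {x : F | x - x0 ∈ kerSub (p := p) a' (k+1)} := by
    ext x
    simp only [Set.mem_setOf_eq]
    rw [hfs, hc, mem_kerSub, stmtLsub]
    constructor
    · intro hh; linear_combination hh
    · intro hh; linear_combination hh
  refine ⟨kerSub (p := p) a' (k+1), ?_, x0, hSeq⟩
  apply finrank_of_card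
  rw [← card_coset (kerSub (p := p) a' (k+1)) x0, ← hSeq]
  exact hS

theorem stmt13 (p m h : ℕ) [Fact p.Prime] (hm : 0 < m) (F : Type) [Field F] [Fintype F]
    [Algebra (ZMod p) F] (hcard : Fintype.card F = p ^ m) (hh : h < m) (j : ℕ) (hj : j ≤ h) :
    (Nat.card {S : Set F //
        (∃ (c : F) (a : Fin (h+1) → F),
          S = {x : F | c + ∑ i : Fin (h+1), a i * x ^ p ^ (i : ℕ) = 0}) ∧
        Nat.card S = p ^ j} = gaussBinom p m j * p ^ (m - j)) ∧
    (∀ U : Submodule (ZMod p) F, Module.finrank (ZMod p) ↥U = j → ∀ x0 : F,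
      ∃ (c : F) (a : Fin (h+1) → F),
        {x : F | c + ∑ i : Fin (h+1), a i * x ^ p ^ (i : ℕ) = 0} =
          (x0 + ·) '' (U : Set F)) := by
  have hm' : finrank (ZMod p) F = m := by
    have hc := card_eq_pow_finrank (K := ZMod p) (V := F)
    rw [ZMod.card, hcard] at hc
    exact Nat.pow_right_injective (Fact.out : p.Prime).two_le hc.symm
  constructor
  · have hjm : j ≤ m := by omega
    have hN : Nat.card {U : Submodule (ZMod p) F // finrank (ZMod p) ↥U = j}
        = gaussBinom p m j := by
      have hsc := subspace_count (K := ZMod p) (V := F) j (by rw [hm']; omega)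
      rw [ZMod.card, hm'] at hsc
      have hkey := gauss_key p m j hjm
      have hc1 : ((∏ i : Fin j, (p^j - p^(i:ℕ)) : ℕ) : ℤ) = gA p j j := by
        rw [Fin.prod_univ_eq_prod_range (fun i => p^j - p^i) j, Nat.cast_prod]
        refine Finset.prod_congr rfl fun i hi => ?_
        rw [Nat.cast_sub (Nat.pow_le_pow_right (Fact.out : p.Prime).pos
          (le_of_lt (Finset.mem_range.mp hi)))]
        push_cast; ring
      have hc2 : ((∏ i : Fin j, (p^m - p^(i:ℕ)) : ℕ) : ℤ) = gA p m j := by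
        rw [Fin.prod_univ_eq_prod_range (fun i => p^m - p^i) j, Nat.cast_prod]
        refine Finset.prod_congr rfl fun i hi => ?_
        rw [Nat.cast_sub (Nat.pow_le_pow_right (Fact.out : p.Prime).pos
          (by have := Finset.mem_range.mp hi; omega))]
        push_cast; ring
      have hD0 : gA p j j ≠ 0 := by
        rw [← hc1]
        have hpos : 0 < ∏ i : Fin j, (p^j - p^(i:ℕ)) :=
          Finset.prod_pos fun i _ => Nat.sub_pos_of_lt
            (Nat.pow_lt_pow_right (Fact.out : p.Prime).one_lt i.isLt)
        exact_mod_cast hpos.ne'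
      have hint : (Nat.card {U : Submodule (ZMod p) F // finrank (ZMod p) ↥U = j} : ℤ)
          * gA p j j = (gaussBinom p m j : ℤ) * gA p j j := by
        rw [hkey, ← hc2, ← hc1, ← Nat.cast_mul, hsc]
      exact_mod_cast mul_right_cancel₀ hD0 hint
    have hiff : ∀ S : Set F,
        ((∃ (c : F) (a : Fin (h+1) → F),
          S = {x : F | c + ∑ i : Fin (h+1), a i * x ^ p ^ (i : ℕ) = 0}) ∧
            Nat.card S = p ^ j) ↔
        (∃ U : Submodule (ZMod p) F, finrank (ZMod p) ↥U = j ∧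
          ∃ x0 : F, S = {x : F | x - x0 ∈ U}) := by
      intro S
      constructor
      · rintro ⟨⟨c, a, rfl⟩, hcard'⟩
        exact root_is_coset c a hcard'
      · rintro ⟨U, hU, x0, rfl⟩
        refine ⟨?_, ?_⟩
        · obtain ⟨c, a, hca⟩ := construct j h (by omega) U hU x0
          exact ⟨c, a, hca.symm⟩
        · rw [card_coset U x0, card_of_finrank U hU]
    rw [Nat.card_congr (Equiv.subtypeEquivRight hiff), coset_count j, hm', hN]
  · intro U hU x0
    obtain ⟨c, a, hca⟩ := construct j h hj U hU x0
    exact ⟨c, a, by rw [hca, image_coset]⟩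
end secMain
end secCount
end
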